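/- Let X be a finite topological T₀-space. Then there exists a non-trivial semiflow φ : ℝ≥0 × X → X on X if and only if X has at least one down beat point. -/

import Mathlib

open NNReal Topology Filter

/-- A semiflow on a topological space `X`: a jointly continuous map
`φ : ℝ≥0 × X → X` with `φ 0 x = x` and `φ s (φ t x) = φ (s + t) x`. -/
def IsSemiflow {X : Type*} [TopologicalSpace X] (φ : ℝ≥0 → X → X) : Prop :=
  Continuous (fun p : ℝ≥0 × X => φ p.1 p.2) ∧
  (∀ x : X, φ 0 x = x) ∧
  ∀ (s t : ℝ≥0) (x : X), φ s (φ t x) = φ (s + t) x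

/-- A semiflow is trivial if every time-`t` map is the identity. -/
def IsTrivialSemiflow {X : Type*} [TopologicalSpace X] (φ : ℝ≥0 → X → X) : Prop :=
  ∀ (t : ℝ≥0) (x : X), φ t x = x

/-- `x` is a down beat point: `U_x \ {x}` has a greatest element in the
specialization order (`y ⤳ x` means `y ≤ x`, i.e. `y ∈ U_x`). -/
def IsDownBeatPoint {X : Type*} [TopologicalSpace X] (x : X) : Prop :=
  ∃ m : X, (m ⤳ x ∧ m ≠ x) ∧ ∀ y : X, y ⤳ x → y ≠ x → y ⤳ m

/-- `x` is an up beat point: `F_x \ {x}` has a least element in the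
specialization order. -/
def IsUpBeatPoint {X : Type*} [TopologicalSpace X] (x : X) : Prop :=
  ∃ m : X, (x ⤳ m ∧ m ≠ x) ∧ ∀ y : X, x ⤳ y → y ≠ x → m ⤳ y

section Aux

open Set

variable {X : Type*} [TopologicalSpace X]

/-- The retraction associated to a down beat point is continuous. -/
lemma beat_retraction_continuous [Finite X] {x m : X} (hm : m ⤳ x) (hmx : m ≠ x)
    (hmax : ∀ y : X, y ⤳ x → y ≠ x → y ⤳ m) [DecidableEq X] :
    Continuous (fun y : X => if y = x then m else y) := by
  rw [continuous_def]
  intro U hU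
  by_cases hxU : x ∈ U
  · have hmU : m ∈ U := hm.mem_open hU hxU
    have : (fun y : X => if y = x then m else y) ⁻¹' U = U := by
      ext y
      by_cases hy : y = x
      · subst hy; simp [hmU, hxU]
      · simp [hy]
    rw [this]; exact hU
  by_cases hmU : m ∈ U
  · have : (fun y : X => if y = x then m else y) ⁻¹' U = U ∪ nhdsKer {x} := by
      ext y
      by_cases hy : y = x
      · subst hy
        have hye : y ∈ nhdsKer {y} := mem_nhdsKer_singleton.2 specializes_rfl
        simp [hye, hmU]
      · simp only [Set.mem_preimage, if_neg hy, Set.mem_union]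
        constructor
        · exact fun h => Or.inl h
        · rintro (h | h)
          · exact h
          · exact ((hmax y (mem_nhdsKer_singleton.1 h) hy).mem_open hU hmU)
    rw [this]; exact hU.union isOpen_nhdsKer
  · have : (fun y : X => if y = x then m else y) ⁻¹' U = U := by
      ext y
      by_cases hy : y = x
      · subst hy; simp [hmU, hxU]
      · simp [hy]
    rw [this]; exact hU

/-- In a finite `T₀` space, every nonempty set has an element minimal with
respect to specialization. -/
lemma exists_spec_minimal [Finite X] [T0Space X] {s : Set X} (hs : s.Nonempty) :
    ∃ x ∈ s, ∀ z ∈ s, z ⤳ x → z = x := by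
  letI := specializationOrder X
  obtain ⟨x, hxs, hx⟩ := Set.Finite.exists_maximalFor id s (Set.toFinite s) hs
  exact ⟨x, hxs, fun z hz hzx => le_antisymm (hx hz hzx) hzx⟩

end Aux

/-- A finite `T₀`-space admits a non-trivial semiflow if and only if it has a
down beat point. -/
theorem exists_nontrivial_semiflow_iff {X : Type*} [TopologicalSpace X] [Finite X]
    [T0Space X] :
    (∃ φ : ℝ≥0 → X → X, IsSemiflow φ ∧ ¬ IsTrivialSemiflow φ) ↔
      ∃ x : X, IsDownBeatPoint x := by
  classical
  constructor
  · rintro ⟨φ, ⟨hc, h0, hadd⟩, hnt⟩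
    cases isEmpty_or_nonempty X with
    | inl h => exact absurd (fun t x => isEmptyElim x) hnt
    | inr hne =>
      haveI : Fintype X := Fintype.ofFinite X
      -- Step 1: a uniform small time interval on which every orbit stays in the
      -- minimal open set of its starting point.
      have hA : ∀ x : X, ∃ ε : ℝ≥0, 0 < ε ∧ ∀ t : ℝ≥0, t < ε → φ t x ⤳ x := by
        intro x
        have hpre : IsOpen ((fun p : ℝ≥0 × X => φ p.1 p.2) ⁻¹' nhdsKer {x}) :=
          isOpen_nhdsKer.preimage hc
        have hmem : ((0 : ℝ≥0), x) ∈ (fun p : ℝ≥0 × X => φ p.1 p.2) ⁻¹' nhdsKer {x} := by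
          simp only [Set.mem_preimage, h0 x]
          exact mem_nhdsKer_singleton.2 (specializes_refl x)
        obtain ⟨u, v, hu, hv, h0u, hxv, huv⟩ := isOpen_prod_iff.1 hpre 0 x hmem
        have hu0 : u ∈ 𝓝 (0 : ℝ≥0) := hu.mem_nhds h0u
        obtain ⟨ε, hε, hIio⟩ := NNReal.nhds_zero_basis.mem_iff.1 hu0
        refine ⟨ε, hε, fun t ht => ?_⟩
        have : (t, x) ∈ (fun p : ℝ≥0 × X => φ p.1 p.2) ⁻¹' nhdsKer {x} :=
          huv ⟨hIio ht, hxv⟩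
        exact mem_nhdsKer_singleton.1 this
      choose e he0 heP using hA
      set ε : ℝ≥0 := Finset.univ.inf' Finset.univ_nonempty e with hεdef
      have hε0 : 0 < ε := by
        rw [hεdef, Finset.lt_inf'_iff]
        exact fun x _ => he0 x
      have hεle : ∀ x : X, ε ≤ e x := fun x =>
        Finset.inf'_le e (Finset.mem_univ x)
      have hsmall : ∀ t : ℝ≥0, t < ε → ∀ x : X, φ t x ⤳ x :=
        fun t ht x => heP x t (lt_of_lt_of_le ht (hεle x))
      -- Step 2: there is a small time at which the flow is not the identity.
      have hstep2 : ∃ t : ℝ≥0, t < ε ∧ ∃ x : X, φ t x ≠ x := by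
        by_contra h
        push_neg at h
        apply hnt
        intro t x
        set c : ℝ≥0 := ε / 2 with hc2
        have hc0 : 0 < c := by positivity
        have hcε : c < ε := NNReal.half_lt_self (ne_of_gt hε0)
        have key : ∀ n : ℕ, ∀ s : ℝ≥0, s ≤ n * c → ∀ y : X, φ s y = y := by
          intro n
          induction n with
          | zero =>
            intro s hs y
            have : s = 0 := le_antisymm (by simpa using hs) zero_le
            rw [this]; exact h0 y
          | succ n ih =>
            intro s hs y
            by_cases hsn : s ≤ n * c
            · exact ih s hsn y
            · push_neg at hsn
              have hnc_le : (n : ℝ≥0) * c ≤ s := le_of_lt hsn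
              have hsub : s - n * c ≤ c := by
                have : s ≤ n * c + c := by
                  calc s ≤ (n + 1 : ℕ) * c := hs
                  _ = n * c + c := by push_cast; ring
                exact tsub_le_iff_right.2 (by rwa [add_comm] at this)
              have h1 : φ (n * c) y = y := ih (n * c) le_rfl y
              have h2 : φ (s - n * c) (φ (n * c) y) = φ s y := by
                rw [hadd, tsub_add_cancel_of_le hnc_le]
              rw [← h2, h1]
              exact h (s - n * c) (lt_of_le_of_lt hsub hcε) y
        obtain ⟨n, hn⟩ := exists_nat_ge (t / c)
        have : t ≤ n * c := by
          have := mul_le_mul_left hn c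
          rwa [div_mul_cancel₀ _ (ne_of_gt hc0)] at this
        exact key n t this x
      obtain ⟨t₀, ht₀, x₀, hx₀⟩ := hstep2
      -- the time-`t₀` map
      set f : X → X := φ t₀ with hfdef
      have hfc : Continuous f := by
        have : Continuous fun x : X => φ t₀ x :=
          hc.comp (Continuous.prodMk continuous_const continuous_id)
        exact this
      have hfspec : ∀ x : X, f x ⤳ x := fun x => hsmall t₀ ht₀ x
      have hsne : ({x : X | f x ≠ x}).Nonempty := ⟨x₀, hx₀⟩
      obtain ⟨x, hxs, hxmin⟩ := exists_spec_minimal hsne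
      refine ⟨x, f x, ⟨hfspec x, hxs⟩, fun y hyx hyne => ?_⟩
      have hyfix : f y = y := by
        by_contra hcontra
        exact hyne (hxmin y hcontra hyx)
      have : f y ⤳ f x := hyx.map hfc
      rwa [hyfix] at this
  · rintro ⟨x, m, ⟨hm, hmx⟩, hmax⟩
    set r : X → X := fun y => if y = x then m else y with hrdef
    have hr : Continuous r := beat_retraction_continuous hm hmx hmax
    have hrU : ∀ U : Set X, IsOpen U → ∀ y ∈ U, r y ∈ U := by
      intro U hU y hy
      by_cases hyx : y = x
      · subst hyx
        simp only [hrdef, if_pos rfl]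
        exact hm.mem_open hU hy
      · simpa [hrdef, hyx] using hy
    refine ⟨fun t y => if t = 0 then y else r y, ⟨?_, ?_, ?_⟩, ?_⟩
    · rw [continuous_def]
      intro U hU
      have heq : (fun p : ℝ≥0 × X => if p.1 = 0 then p.2 else r p.2) ⁻¹' U =
          (Set.univ ×ˢ U) ∪ ({t : ℝ≥0 | t ≠ 0} ×ˢ (r ⁻¹' U)) := by
        ext ⟨t, y⟩
        by_cases ht : t = 0
        · simp [ht]
        · simp only [Set.mem_preimage, if_neg ht, Set.mem_union, Set.mem_prod,
            Set.mem_univ, true_and, Set.mem_setOf_eq, ht, not_false_iff]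
          constructor
          · exact fun h => Or.inr ⟨ht, h⟩
          · rintro (h | ⟨-, h⟩)
            · exact hrU U hU y h
            · exact h
      rw [heq]
      exact (isOpen_univ.prod hU).union ((isOpen_compl_singleton).prod (hU.preimage hr))
    · intro y; simp
    · intro s t y
      by_cases hs : s = 0
      · subst hs; simp
      · by_cases ht : t = 0
        · subst ht; simp [hs]
        · have hst : s + t ≠ 0 := by positivity
          simp only [if_neg hs, if_neg ht, if_neg hst]
          by_cases hyx : y = x
          · subst hyx
            simp [hrdef, hmx]
          · simp [hrdef, hyx]
    · intro htriv
      have := htriv 1 x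
      simp only [one_ne_zero, if_neg, hrdef, if_pos rfl] at this
      exact hmx this
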